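/- Let n ≥ 3 and k = 1. No function analytic in a neighborhood of φ_{n,1} can agree with S_{n,1} on [0, φ_{n,1}): if g is analytic at φ_{n,1} with g = S_{n,1} on an interval (φ_{n,1} - ε, φ_{n,1}), then a contradiction arises because the local behavior of the inverse of F_{n,1} at 1 is (φ_{n,1} - u)^{n/(n-1)} up to analytic units, and n/(n-1) is not an integer for n ≥ 3. Concretely: the function u ↦ 1 - S_{n,1}(u) behaves like c(φ_{n,1}-u)^{n/(n-1)}(1 + o(1)) as u → φ_{n,1}⁻ for some constant c > 0, which is incompatible with analyticity of S_{n,1} at φ_{n,1} for n ≥ 3. -/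

import Mathlib

open Real Set Filter MeasureTheory intervalIntegral

noncomputable def fn (n : ℕ) (x : ℝ) : ℝ := (1 - x ^ (n:ℝ)) ^ (-(1/(n:ℝ)))
noncomputable def sn (n : ℕ) (x : ℝ) : ℝ := ∑ i ∈ Finset.range n, x ^ i

lemma one_sub_pow (n : ℕ) (x : ℝ) : 1 - x ^ (n:ℝ) = (1 - x) * sn n x := by
  rw [Real.rpow_natCast, sn]
  linear_combination geom_sum_mul x n

lemma sn_one (n : ℕ) : sn n 1 = n := by simp [sn]

lemma one_le_sn {n : ℕ} (hn : 1 ≤ n) {x : ℝ} (hx : 0 ≤ x) : 1 ≤ sn n x := by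
  have : (1:ℝ) = ∑ i ∈ Finset.range 1, x ^ i := by simp
  rw [this, sn]
  exact Finset.sum_le_sum_of_subset_of_nonneg (by simp; omega)
    (fun i _ _ => pow_nonneg hx i)

lemma sn_mono {n : ℕ} {x y : ℝ} (hx : 0 ≤ x) (hxy : x ≤ y) : sn n x ≤ sn n y :=
  Finset.sum_le_sum fun i _ => pow_le_pow_left₀ hx hxy i

lemma sn_nonneg (n : ℕ) {x : ℝ} (hx : 0 ≤ x) : 0 ≤ sn n x :=
  Finset.sum_nonneg fun i _ => pow_nonneg hx i

lemma fn_eq {n : ℕ} {x : ℝ} (hx : 0 ≤ x) (hx1 : x ≤ 1) :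
    fn n x = (1 - x) ^ (-(1/(n:ℝ))) * (sn n x) ^ (-(1/(n:ℝ))) := by
  rw [fn, one_sub_pow, Real.mul_rpow (by linarith) (sn_nonneg n hx)]

lemma g0_int {n : ℕ} (hn : 2 ≤ n) (a b : ℝ) :
    IntervalIntegrable (fun x => (1 - x) ^ (-(1/(n:ℝ)))) volume a b := by
  have h1 : (2:ℝ) ≤ n := by exact_mod_cast hn
  have h2 : (1:ℝ)/n ≤ 1/2 := by apply div_le_div_of_nonneg_left <;> linarith
  have h : -1 < -(1/(n:ℝ)) := by linarith
  have := (intervalIntegral.intervalIntegrable_rpow' (a := 1 - a) (b := 1 - b) h).comp_sub_left 1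
  simpa using this

lemma fn_meas (n : ℕ) : Measurable (fn n) := by
  unfold fn; fun_prop

lemma fn_nonneg (n : ℕ) {x : ℝ} (hx : 0 ≤ x) (hx1 : x ≤ 1) : 0 ≤ fn n x := by
  rw [fn, one_sub_pow]
  exact Real.rpow_nonneg (mul_nonneg (by linarith) (sn_nonneg n hx)) _

lemma fn_int {n : ℕ} (hn : 2 ≤ n) {y : ℝ} (hy : 0 ≤ y) (hy1 : y ≤ 1) :
    IntervalIntegrable (fn n) volume y 1 := by
  have hn1 : 1 ≤ n := le_trans (by norm_num) hn
  have hsy : (0:ℝ) < sn n y := lt_of_lt_of_le one_pos (one_le_sn hn1 hy)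
  have hg : IntervalIntegrable
      (fun x => (sn n y) ^ (-(1/(n:ℝ))) * (1 - x) ^ (-(1/(n:ℝ)))) volume y 1 :=
    (g0_int hn y 1).const_mul _
  apply hg.mono_fun ((fn_meas n).aestronglyMeasurable.restrict)
  rw [Filter.EventuallyLE, MeasureTheory.ae_restrict_iff' measurableSet_uIoc]
  filter_upwards with x hx
  rw [Set.uIoc_of_le hy1, Set.mem_Ioc] at hx
  have hx0 : 0 ≤ x := le_trans hy hx.1.le
  have h1x : 0 ≤ 1 - x := by linarith [hx.2]
  rw [Real.norm_of_nonneg (fn_nonneg n hx0 hx.2), Real.norm_of_nonneg (by positivity)]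
  rw [fn_eq hx0 hx.2, mul_comm]
  apply mul_le_mul_of_nonneg_right _ (Real.rpow_nonneg h1x _)
  exact Real.rpow_le_rpow_of_nonpos hsy (sn_mono hy hx.1.le)
    (neg_nonpos.mpr (by positivity))

lemma alpha_pos {n : ℕ} (hn : 2 ≤ n) : 0 < 1 - 1/(n:ℝ) := by
  have h1 : (2:ℝ) ≤ n := by exact_mod_cast hn
  have h2 : (1:ℝ)/n ≤ 1/2 := by apply div_le_div_of_nonneg_left <;> linarith
  linarith

lemma I_eval {n : ℕ} (hn : 2 ≤ n) {y : ℝ} (hy1 : y ≤ 1) :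
    ∫ x in y..1, (1 - x) ^ (-(1/(n:ℝ))) = (1 - y) ^ (1 - 1/(n:ℝ)) / (1 - 1/(n:ℝ)) := by
  have hα := alpha_pos hn
  have h : ∫ x in y..1, (1 - x) ^ (-(1/(n:ℝ)))
      = ∫ t in (0:ℝ)..(1 - y), t ^ (-(1/(n:ℝ))) := by
    have := intervalIntegral.integral_comp_sub_left (a := y) (b := 1)
      (fun t => t ^ (-(1/(n:ℝ)))) 1
    simpa using this
  rw [h, integral_rpow (Or.inl (by linarith))]
  rw [Real.zero_rpow (by linarith)]
  norm_num
  ring_nf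

lemma G_bounds {n : ℕ} (hn : 2 ≤ n) {y : ℝ} (hy : 0 ≤ y) (hy1 : y ≤ 1) :
    (n:ℝ) ^ (-(1/(n:ℝ))) * ((1 - y) ^ (1 - 1/(n:ℝ)) / (1 - 1/(n:ℝ))) ≤ (∫ x in y..1, fn n x)
    ∧ (∫ x in y..1, fn n x)
      ≤ (sn n y) ^ (-(1/(n:ℝ))) * ((1 - y) ^ (1 - 1/(n:ℝ)) / (1 - 1/(n:ℝ))) := by
  have hn1 : 1 ≤ n := le_trans (by norm_num) hn
  have hnn : (0:ℝ) < n := by positivity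
  have hfi := fn_int hn hy hy1
  have hgi := g0_int hn y 1
  constructor
  · rw [← I_eval hn hy1, ← intervalIntegral.integral_const_mul]
    apply intervalIntegral.integral_mono_on hy1 (hgi.const_mul _) hfi
    intro x hx
    have hx0 : 0 ≤ x := le_trans hy hx.1
    have hne : -(1/(n:ℝ)) ≠ 0 := by
      rw [neg_ne_zero]; positivity
    rcases eq_or_lt_of_le hx.2 with h1 | h1
    · subst h1
      have hne' : (-(↑n)⁻¹ : ℝ) ≠ 0 := by
        rw [neg_ne_zero]; positivity
      simp [fn, one_div, Real.zero_rpow hne']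
    · rw [fn_eq hx0 h1.le, mul_comm]
      apply mul_le_mul_of_nonneg_left _ (Real.rpow_nonneg (by linarith) _)
      have hsx : (0:ℝ) < sn n x := lt_of_lt_of_le one_pos (one_le_sn hn1 hx0)
      have hsxn : sn n x ≤ n := by
        calc sn n x ≤ sn n 1 := sn_mono hx0 h1.le
        _ = n := sn_one n
      exact Real.rpow_le_rpow_of_nonpos hsx hsxn (neg_nonpos.mpr (by positivity))
  · rw [← I_eval hn hy1, ← intervalIntegral.integral_const_mul]
    apply intervalIntegral.integral_mono_on hy1 hfi (hgi.const_mul _)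
    intro x hx
    have hx0 : 0 ≤ x := le_trans hy hx.1
    have h1x : 0 ≤ 1 - x := by linarith [hx.2]
    have hsy : (0:ℝ) < sn n y := lt_of_lt_of_le one_pos (one_le_sn hn1 hy)
    rw [fn_eq hx0 hx.2, mul_comm]
    apply mul_le_mul_of_nonneg_right _ (Real.rpow_nonneg h1x _)
    exact Real.rpow_le_rpow_of_nonpos hsy (sn_mono hy hx.1) (neg_nonpos.mpr (by positivity))

lemma sn_continuous (n : ℕ) : Continuous (sn n) := by
  unfold sn; fun_prop

lemma tendsto_ratio {n : ℕ} (hn : 2 ≤ n) :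
    Filter.Tendsto (fun y => (∫ x in y..1, fn n x) / (1 - y) ^ (1 - 1/(n:ℝ)))
      (nhdsWithin 1 (Set.Iio 1))
      (nhds ((n:ℝ) ^ (-(1/(n:ℝ))) / (1 - 1/(n:ℝ)))) := by
  have hα := alpha_pos hn
  have hnn : (0:ℝ) < n := by positivity
  -- upper bound function tends to the limit
  have hupper : Filter.Tendsto (fun y => (sn n y) ^ (-(1/(n:ℝ))) / (1 - 1/(n:ℝ)))
      (nhdsWithin 1 (Set.Iio 1))
      (nhds ((n:ℝ) ^ (-(1/(n:ℝ))) / (1 - 1/(n:ℝ)))) := by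
    have hc : ContinuousAt (fun y => (sn n y) ^ (-(1/(n:ℝ))) / (1 - 1/(n:ℝ))) 1 := by
      apply ContinuousAt.div_const
      apply ContinuousAt.rpow_const (sn_continuous n).continuousAt
      left
      rw [sn_one]
      positivity
    have := hc.tendsto
    rw [sn_one] at this
    exact this.mono_left nhdsWithin_le_nhds
  apply tendsto_of_tendsto_of_tendsto_of_le_of_le' tendsto_const_nhds hupper
  · filter_upwards [Ioo_mem_nhdsLT_of_mem (Set.mem_Ioc.mpr ⟨zero_lt_one, le_refl 1⟩)]
      with y hy
    have h1y : (0:ℝ) < 1 - y := by linarith [hy.2]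
    have hb := (G_bounds hn hy.1.le hy.2.le).1
    rw [le_div_iff₀ (Real.rpow_pos_of_pos h1y _)]
    calc (n:ℝ) ^ (-(1/(n:ℝ))) / (1 - 1/(n:ℝ)) * (1 - y) ^ (1 - 1/(n:ℝ))
        = (n:ℝ) ^ (-(1/(n:ℝ))) * ((1 - y) ^ (1 - 1/(n:ℝ)) / (1 - 1/(n:ℝ))) := by ring
      _ ≤ _ := hb
  · filter_upwards [Ioo_mem_nhdsLT_of_mem (Set.mem_Ioc.mpr ⟨zero_lt_one, le_refl 1⟩)]
      with y hy
    have h1y : (0:ℝ) < 1 - y := by linarith [hy.2]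
    have hb := (G_bounds hn hy.1.le hy.2.le).2
    rw [div_le_iff₀ (Real.rpow_pos_of_pos h1y _)]
    calc (∫ x in y..1, fn n x)
        ≤ (sn n y) ^ (-(1/(n:ℝ))) * ((1 - y) ^ (1 - 1/(n:ℝ)) / (1 - 1/(n:ℝ))) := hb
      _ = (sn n y) ^ (-(1/(n:ℝ))) / (1 - 1/(n:ℝ)) * (1 - y) ^ (1 - 1/(n:ℝ)) := by ring

theorem stmt_18 (n : ℕ) (hn : 3 ≤ n)
    (F S : ℝ → ℝ)
    (hF : ∀ y, F y = ∫ x in (0:ℝ)..y, (1 - x ^ (n:ℝ)) ^ (-(1 / (n:ℝ))))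
    (φ : ℝ) (hφ : φ = F 1)
    (hS1 : ∀ y ∈ Set.Icc (0:ℝ) 1, S (F y) = y)
    (hS2 : ∀ u ∈ Set.Icc (0:ℝ) φ, F (S u) = u) :
    (∃ c : ℝ, 0 < c ∧
      Filter.Tendsto (fun u : ℝ => (1 - S u) / (φ - u) ^ ((n : ℝ) / (n - 1)))
        (nhdsWithin φ (Set.Iio φ)) (nhds c)) ∧
    ¬ ∃ g : ℝ → ℝ, AnalyticAt ℝ g φ ∧
        ∀ᶠ u in nhdsWithin φ (Set.Iio φ), g u = S u := by
  have hn2 : 2 ≤ n := le_trans (by norm_num) hn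
  have hn3 : (3:ℝ) ≤ n := by exact_mod_cast hn
  have hnn : (0:ℝ) < n := by linarith
  set α : ℝ := 1 - 1/(n:ℝ) with hα
  have hαpos : 0 < α := alpha_pos hn2
  set q : ℝ := (n:ℝ)/((n:ℝ)-1) with hq
  have hn1' : (0:ℝ) < (n:ℝ) - 1 := by linarith
  have hq_eq : α * q = 1 := by
    rw [hα, hq]; field_simp
  have hq1 : 1 < q := by rw [hq, lt_div_iff₀ hn1']; linarith
  have hq2 : q < 2 := by rw [hq, div_lt_iff₀ hn1']; linarith
  have hqpos : 0 < q := by linarith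
  have hF' : ∀ y, F y = ∫ x in (0:ℝ)..y, fn n x := hF
  have hFint : IntervalIntegrable (fn n) volume 0 1 := fn_int hn2 le_rfl zero_le_one
  have hF0 : F 0 = 0 := by rw [hF']; exact intervalIntegral.integral_same
  have hsub : ∀ a b : ℝ, a ∈ Set.Icc (0:ℝ) 1 → b ∈ Set.Icc (0:ℝ) 1 →
      IntervalIntegrable (fn n) volume a b := by
    intro a b ha hb
    apply hFint.mono_set
    apply Set.uIcc_subset_uIcc <;> rw [Set.uIcc_of_le zero_le_one] <;> assumption
  have h01 : (0:ℝ) ∈ Set.Icc (0:ℝ) 1 := ⟨le_rfl, zero_le_one⟩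
  have h11 : (1:ℝ) ∈ Set.Icc (0:ℝ) 1 := ⟨zero_le_one, le_rfl⟩
  have hFsub : ∀ a b : ℝ, a ∈ Set.Icc (0:ℝ) 1 → b ∈ Set.Icc (0:ℝ) 1 →
      F b - F a = ∫ x in a..b, fn n x := by
    intro a b ha hb
    rw [hF' a, hF' b]
    exact intervalIntegral.integral_interval_sub_left (hsub 0 b h01 hb) (hsub 0 a h01 ha)
  have hFmono : StrictMonoOn F (Set.Icc 0 1) := by
    intro a ha b hb hab
    have h : 0 < F b - F a := by
      rw [hFsub a b ha hb]
      apply intervalIntegral.intervalIntegral_pos_of_pos_on (hsub a b ha hb) _ hab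
      intro x hx
      have hx0 : 0 ≤ x := le_trans ha.1 hx.1.le
      have hx1 : x < 1 := lt_of_lt_of_le hx.2 hb.2
      show (0:ℝ) < (1 - x ^ (n:ℝ)) ^ (-(1/(n:ℝ)))
      apply Real.rpow_pos_of_pos
      rw [Real.rpow_natCast]
      have : x ^ n < 1 := pow_lt_one₀ hx0 hx1 (by omega)
      linarith
    linarith
  have hφpos : 0 < φ := by
    rw [hφ, ← hF0]
    exact hFmono h01 h11 zero_lt_one
  have hFcont : ContinuousOn F (Set.Icc 0 1) := by
    have h := intervalIntegral.continuousOn_primitive_interval' hFint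
      (by rw [Set.uIcc_of_le zero_le_one]; exact h01)
    rw [Set.uIcc_of_le zero_le_one] at h
    exact h.congr fun y _ => hF' y
  have hS : ∀ u ∈ Set.Icc (0:ℝ) φ, S u ∈ Set.Icc (0:ℝ) 1 ∧ F (S u) = u := by
    intro u hu
    have hu' : u ∈ Set.Icc (F 0) (F 1) := by rw [hF0, ← hφ]; exact hu
    obtain ⟨y, hy, hyu⟩ := intermediate_value_Icc zero_le_one hFcont hu'
    have hSu : S u = y := by rw [← hyu, hS1 y hy]
    rw [hSu, hyu]
    exact ⟨hy, rfl⟩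
  have hSlt : ∀ u, 0 ≤ u → u < φ → S u < 1 := by
    intro u h0 h1
    obtain ⟨hmem, hFu⟩ := hS u ⟨h0, h1.le⟩
    rcases lt_or_eq_of_le hmem.2 with h | h
    · exact h
    · exfalso
      rw [h, ← hφ] at hFu
      linarith
  have hmemIoo : Set.Ioo (0:ℝ) φ ∈ nhdsWithin φ (Set.Iio φ) :=
    Ioo_mem_nhdsLT_of_mem (Set.mem_Ioc.mpr ⟨hφpos, le_rfl⟩)
  have hStendsto : Filter.Tendsto S (nhdsWithin φ (Set.Iio φ)) (nhdsWithin 1 (Set.Iio 1)) := by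
    rw [tendsto_nhdsWithin_iff]
    constructor
    · rw [tendsto_order]
      constructor
      · intro a ha
        set a' := max a 0 with ha'
        have ha'0 : 0 ≤ a' := le_max_right _ _
        have ha'1 : a' < 1 := max_lt ha zero_lt_one
        have ha'm : a' ∈ Set.Icc (0:ℝ) 1 := ⟨ha'0, ha'1.le⟩
        have hFa' : F a' < φ := by rw [hφ]; exact hFmono ha'm h11 ha'1
        have hFa'0 : 0 ≤ F a' := by
          rw [← hF0]
          exact hFmono.monotoneOn h01 ha'm ha'0
        filter_upwards [Ioo_mem_nhdsLT_of_mem (Set.mem_Ioc.mpr ⟨hFa', le_rfl⟩)] with u hu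
        have hu0 : 0 ≤ u := le_trans hFa'0 hu.1.le
        obtain ⟨hmem, hFu⟩ := hS u ⟨hu0, hu.2.le⟩
        by_contra hcon
        push_neg at hcon
        have hle : S u ≤ a' := le_trans hcon (le_max_left a 0)
        have : F (S u) ≤ F a' := hFmono.monotoneOn hmem ha'm hle
        rw [hFu] at this
        linarith [hu.1]
      · intro a ha
        filter_upwards [hmemIoo] with u hu
        exact lt_of_le_of_lt (hS u ⟨hu.1.le, hu.2.le⟩).1.2 ha
    · filter_upwards [hmemIoo] with u hu
      exact hSlt u hu.1.le hu.2
  have hkey : ∀ᶠ u in nhdsWithin φ (Set.Iio φ),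
      φ - u = (∫ x in (S u)..1, fn n x) ∧ 0 < 1 - S u ∧ 0 < φ - u ∧
        S u ∈ Set.Icc (0:ℝ) 1 := by
    filter_upwards [hmemIoo] with u hu
    obtain ⟨hmem, hFu⟩ := hS u ⟨hu.1.le, hu.2.le⟩
    have hlt := hSlt u hu.1.le hu.2
    refine ⟨?_, by linarith, by linarith [hu.2], hmem⟩
    have h := hFsub (S u) 1 hmem h11
    rw [hFu, ← hφ] at h
    exact h
  set K : ℝ := (n:ℝ) ^ (-(1/(n:ℝ))) / (1 - 1/(n:ℝ)) with hK
  have hKpos : 0 < K := div_pos (Real.rpow_pos_of_pos hnn _) hαpos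
  have hratio2 : Filter.Tendsto (fun u => (φ - u) / (1 - S u) ^ α)
      (nhdsWithin φ (Set.Iio φ)) (nhds K) := by
    apply Filter.Tendsto.congr' _ ((tendsto_ratio hn2).comp hStendsto)
    filter_upwards [hkey] with u hu
    obtain ⟨h1, h2, h3, h4⟩ := hu
    simp only [Function.comp]
    rw [← h1]
  have hmain : Filter.Tendsto (fun u => (1 - S u) / (φ - u) ^ q)
      (nhdsWithin φ (Set.Iio φ)) (nhds (K ^ (-q))) := by
    have hcont : Filter.Tendsto (fun x : ℝ => x ^ (-q)) (nhds K) (nhds (K ^ (-q))) :=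
      (Real.continuousAt_rpow_const K (-q) (Or.inl hKpos.ne')).tendsto
    apply Filter.Tendsto.congr' _ (hcont.comp hratio2)
    filter_upwards [hkey] with u hu
    obtain ⟨h1, h2, h3, h4⟩ := hu
    simp only [Function.comp]
    have hBα : (0:ℝ) < (1 - S u) ^ α := Real.rpow_pos_of_pos h2 _
    rw [Real.div_rpow h3.le hBα.le, ← Real.rpow_mul h2.le]
    have hone : α * (-q) = -1 := by rw [mul_neg, hq_eq]
    rw [hone, Real.rpow_neg_one, Real.rpow_neg h3.le]
    have hne1 : (φ - u) ^ q ≠ 0 := (Real.rpow_pos_of_pos h3 q).ne'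
    field_simp
  have hcpos : 0 < K ^ (-q) := Real.rpow_pos_of_pos hKpos _
  refine ⟨⟨K ^ (-q), hcpos, hmain⟩, ?_⟩
  rintro ⟨g, hg, heq⟩
  have hh : AnalyticAt ℝ (fun u => 1 - g u) φ := analyticAt_const.sub hg
  have hpow0 : ∀ β : ℝ, 0 < β →
      Filter.Tendsto (fun u => (φ - u) ^ β) (nhdsWithin φ (Set.Iio φ)) (nhds 0) := by
    intro β hβ
    have h1 : Filter.Tendsto (fun u : ℝ => φ - u) (nhdsWithin φ (Set.Iio φ)) (nhds 0) := by
      have h : Filter.Tendsto (fun u : ℝ => φ - u) (nhds φ) (nhds (φ - φ)) :=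
        tendsto_const_nhds.sub tendsto_id
      rw [sub_self] at h
      exact h.mono_left nhdsWithin_le_nhds
    have h2 : Filter.Tendsto (fun x : ℝ => x ^ β) (nhds 0) (nhds ((0:ℝ) ^ β)) :=
      (Real.continuousAt_rpow_const 0 β (Or.inr hβ.le)).tendsto
    rw [Real.zero_rpow hβ.ne'] at h2
    exact h2.comp h1
  rcases eq_or_ne (analyticOrderAt (fun u => 1 - g u) φ) ⊤ with htop | hfin
  · have h0 : ∀ᶠ u in nhdsWithin φ (Set.Iio φ), (1:ℝ) - S u = 0 := by
      filter_upwards [(analyticOrderAt_eq_top.mp htop).filter_mono nhdsWithin_le_nhds, heq]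
        with u h1 h2
      rw [← h2]; exact h1
    have hzero : Filter.Tendsto (fun u => (1 - S u) / (φ - u) ^ q)
        (nhdsWithin φ (Set.Iio φ)) (nhds 0) := by
      apply Filter.Tendsto.congr' _ (tendsto_const_nhds (α := ℝ))
      filter_upwards [h0] with u h1
      rw [h1, zero_div]
    have := tendsto_nhds_unique hmain hzero
    linarith
  · obtain ⟨m, hm⟩ := WithTop.ne_top_iff_exists.mp hfin
    obtain ⟨ψ, hψa, hψ0, hψev⟩ := (hh.analyticOrderAt_eq_natCast (n := m)).mp hm.symm
    have hψt : Filter.Tendsto ψ (nhdsWithin φ (Set.Iio φ)) (nhds (ψ φ)) :=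
      hψa.continuousAt.tendsto.mono_left nhdsWithin_le_nhds
    have hev : ∀ᶠ u in nhdsWithin φ (Set.Iio φ), 1 - S u = (u - φ) ^ m * ψ u := by
      filter_upwards [hψev.filter_mono nhdsWithin_le_nhds, heq] with u h1 h2
      rw [← h2]
      simpa [smul_eq_mul] using h1
    have hflip : ∀ u, 0 < φ - u → (u - φ) ^ m = (-1:ℝ) ^ m * (φ - u) ^ m := by
      intro u _
      rw [← neg_sub, neg_pow]
    rcases le_or_gt m 1 with hm1 | hm2
    · have hmq : (m:ℝ) < q := by
        have : (m:ℝ) ≤ 1 := by exact_mod_cast hm1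
        linarith
      have hE := hpow0 (q - (m:ℝ)) (by linarith)
      have hT := hmain.mul hE
      rw [mul_zero] at hT
      have hT2 : Filter.Tendsto (fun u => ((-1:ℝ)) ^ m * ψ u)
          (nhdsWithin φ (Set.Iio φ)) (nhds ((-1:ℝ) ^ m * ψ φ)) :=
        tendsto_const_nhds.mul hψt
      have heq2 : (fun u => (1 - S u) / (φ - u) ^ q * (φ - u) ^ (q - (m:ℝ)))
          =ᶠ[nhdsWithin φ (Set.Iio φ)] fun u => ((-1:ℝ)) ^ m * ψ u := by
        filter_upwards [hkey, hev] with u hu h5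
        obtain ⟨h1, h2, h3, h4⟩ := hu
        rw [h5, Real.rpow_sub h3, Real.rpow_natCast, hflip u h3]
        have hne1 : (φ - u) ^ q ≠ 0 := (Real.rpow_pos_of_pos h3 q).ne'
        have hne2 : (φ - u) ^ m ≠ 0 := pow_ne_zero m h3.ne'
        field_simp
      have huniq := tendsto_nhds_unique (hT.congr' heq2) hT2
      have hψne : ((-1:ℝ)) ^ m * ψ φ ≠ 0 :=
        mul_ne_zero (pow_ne_zero m (by norm_num)) hψ0
      exact hψne huniq.symm
    · have hmq : q < (m:ℝ) := by
        have : (2:ℝ) ≤ m := by exact_mod_cast hm2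
        linarith
      have hD := hpow0 ((m:ℝ) - q) (by linarith)
      have hT : Filter.Tendsto (fun u => ((-1:ℝ)) ^ m * ψ u * (φ - u) ^ ((m:ℝ) - q))
          (nhdsWithin φ (Set.Iio φ)) (nhds ((-1:ℝ) ^ m * ψ φ * 0)) :=
        (tendsto_const_nhds.mul hψt).mul hD
      rw [mul_zero] at hT
      have heq2 : (fun u => ((-1:ℝ)) ^ m * ψ u * (φ - u) ^ ((m:ℝ) - q))
          =ᶠ[nhdsWithin φ (Set.Iio φ)] fun u => (1 - S u) / (φ - u) ^ q := by
        filter_upwards [hkey, hev] with u hu h5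
        obtain ⟨h1, h2, h3, h4⟩ := hu
        rw [h5, Real.rpow_sub h3, Real.rpow_natCast, hflip u h3]
        have hne1 : (φ - u) ^ q ≠ 0 := (Real.rpow_pos_of_pos h3 q).ne'
        have hne2 : (φ - u) ^ m ≠ 0 := pow_ne_zero m h3.ne'
        field_simp
      have huniq := tendsto_nhds_unique hmain (hT.congr' heq2)
      linarith
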